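/- Let C ⊆ Θ be compact and let q ∈ Γ satisfy inf_{θ ∈ Θ∖C} HD(q,θ) > HD(q,θ*) for some θ* ∈ C, and suppose HD(q,·) has a unique global minimizer θ₀ over Θ. Assume θ ↦ p_k(θ) is continuous on C for each k. Let (q_n) ⊆ Γ with Σ_{k=0}^∞ (q_{n,k}^{1/2} − q_k^{1/2})² → 0 as n → ∞. Then for all sufficiently large n the map θ ↦ HD(q_n,θ) attains a global minimum over Θ, and for any choice of global minimizers θ_n of HD(q_n,·) one has θ_n → θ₀. -/

import Mathlib

open Filter Topology

/-- `q` is a probability distribution on the nonnegative integers. -/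
def IsDistrib (q : ℕ → ℝ) : Prop := (∀ k, 0 ≤ q k) ∧ HasSum q 1

/-- The squared Hellinger distance `HD(q,θ) = Σ_k (q_k^{1/2} - p_k(θ)^{1/2})²`. -/
noncomputable def HDdist (p : ℝ → ℕ → ℝ) (q : ℕ → ℝ) (θ : ℝ) : ℝ :=
  ∑' k, (Real.sqrt (q k) - Real.sqrt (p θ k))^2

open scoped ENNReal

noncomputable section

abbrev HellL2 := lp (fun _ : ℕ => ℝ) 2

lemma memℓp_sqrt' {g : ℕ → ℝ} (h0 : ∀ k, 0 ≤ g k) (hs : Summable g) :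
    Memℓp (fun k => Real.sqrt (g k)) 2 := by
  apply memℓp_gen
  have : (fun k => ‖Real.sqrt (g k)‖ ^ (2 : ℝ≥0∞).toReal) = g := by
    funext k
    rw [Real.norm_eq_abs, abs_of_nonneg (Real.sqrt_nonneg _)]
    norm_num
    exact Real.sq_sqrt (h0 k)
  rwa [this]

def sqel {g : ℕ → ℝ} (h0 : ∀ k, 0 ≤ g k) (hs : Summable g) : HellL2 :=
  ⟨fun k => Real.sqrt (g k), memℓp_sqrt' h0 hs⟩

lemma hellL2_norm_sq (x : HellL2) : ‖x‖ ^ 2 = ∑' k, (x k) ^ 2 := by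
  have h := lp.norm_rpow_eq_tsum (p := 2) (by norm_num) x
  norm_num at h
  simpa [sq_abs] using h

lemma norm_sqel {g : ℕ → ℝ} (h0 : ∀ k, 0 ≤ g k) (hs : Summable g) :
    ‖sqel h0 hs‖ = Real.sqrt (∑' k, g k) := by
  have h := hellL2_norm_sq (sqel h0 hs)
  have h2 : ∑' k, ((sqel h0 hs) k) ^ 2 = ∑' k, g k := by
    apply tsum_congr; intro k; exact Real.sq_sqrt (h0 k)
  rw [h2] at h
  rw [← h, Real.sqrt_sq (norm_nonneg _)]

/-- Cauchy–Schwarz for square roots. -/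
lemma tsum_sqrt_mul_sqrt_le {a b : ℕ → ℝ} (ha0 : ∀ k, 0 ≤ a k) (hb0 : ∀ k, 0 ≤ b k)
    (hsa : Summable a) (hsb : Summable b) :
    ∑' k, Real.sqrt (a k) * Real.sqrt (b k) ≤
      Real.sqrt (∑' k, a k) * Real.sqrt (∑' k, b k) := by
  have h := real_inner_le_norm (sqel ha0 hsa) (sqel hb0 hsb)
  rw [norm_sqel, norm_sqel] at h
  have hi : (inner ℝ (sqel ha0 hsa) (sqel hb0 hsb) : ℝ)
      = ∑' k, Real.sqrt (a k) * Real.sqrt (b k) := by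
    rw [lp.inner_eq_tsum]
    apply tsum_congr; intro k
    simp [RCLike.inner_apply, sqel]
    ring
  rw [hi] at h
  exact h

/-- `HDdist` as squared norm in ℓ². -/
lemma HDdist_eq_normsq (p : ℝ → ℕ → ℝ) (q : ℕ → ℝ) (θ : ℝ)
    (hq0 : ∀ k, 0 ≤ q k) (hqs : Summable q)
    (hp0 : ∀ k, 0 ≤ p θ k) (hps : Summable (p θ)) :
    HDdist p q θ = ‖sqel hq0 hqs - sqel hp0 hps‖ ^ 2 := by
  rw [hellL2_norm_sq]
  apply tsum_congr; intro k
  have : (sqel hq0 hqs - sqel hp0 hps) k = Real.sqrt (q k) - Real.sqrt (p θ k) := by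
    simp [sqel, lp.coeFn_sub]
    rfl
  rw [this]

lemma summable_sqrt_mul {a b : ℕ → ℝ} (ha0 : ∀ k, 0 ≤ a k) (hb0 : ∀ k, 0 ≤ b k)
    (hsa : Summable a) (hsb : Summable b) :
    Summable (fun k => Real.sqrt (a k) * Real.sqrt (b k)) := by
  apply Summable.of_nonneg_of_le
    (fun k => mul_nonneg (Real.sqrt_nonneg _) (Real.sqrt_nonneg _))
    (fun k => ?_) ((hsa.add hsb).div_const 2)
  have h1 := Real.sq_sqrt (ha0 k)
  have h2 := Real.sq_sqrt (hb0 k)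
  nlinarith [sq_nonneg (Real.sqrt (a k) - Real.sqrt (b k))]

lemma HDdist_eq_two_sub (p : ℝ → ℕ → ℝ) (q : ℕ → ℝ) (θ : ℝ)
    (hq : IsDistrib q) (hpθ : IsDistrib (p θ)) :
    HDdist p q θ = 2 - 2 * ∑' k, Real.sqrt (q k) * Real.sqrt (p θ k) := by
  have hsq := hq.2.summable
  have hsp := hpθ.2.summable
  have hm := summable_sqrt_mul hq.1 hpθ.1 hsq hsp
  have hpt : ∀ k : ℕ, (Real.sqrt (q k) - Real.sqrt (p θ k))^2
      = (q k + p θ k) - 2 * (Real.sqrt (q k) * Real.sqrt (p θ k)) := by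
    intro k
    have h1 := Real.sq_sqrt (hq.1 k)
    have h2 := Real.sq_sqrt (hpθ.1 k)
    have h3 : (Real.sqrt (q k) - Real.sqrt (p θ k))^2
        = Real.sqrt (q k)^2 + Real.sqrt (p θ k)^2
          - 2 * (Real.sqrt (q k) * Real.sqrt (p θ k)) := by ring
    rw [h3, h1, h2]
  unfold HDdist
  rw [tsum_congr hpt, Summable.tsum_sub (hsq.add hsp) (hm.mul_left 2), Summable.tsum_add hsq hsp,
    tsum_mul_left, hq.2.tsum_eq, hpθ.2.tsum_eq]
  ring

lemma tail_tsum_le_one {g : ℕ → ℝ} (hg : IsDistrib g) (K : ℕ) :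
    ∑' k, g (k + K) ≤ 1 := by
  have hsplit := Summable.sum_add_tsum_nat_add (f := g) K hg.2.summable
  rw [hg.2.tsum_eq] at hsplit
  have : 0 ≤ ∑ i ∈ Finset.range K, g i := Finset.sum_nonneg (fun i _ => hg.1 i)
  linarith

lemma continuousOn_tsum_sqrt {Θ C : Set ℝ} {p : ℝ → ℕ → ℝ} {r : ℕ → ℝ}
    (hr : IsDistrib r) (hp : ∀ θ ∈ Θ, IsDistrib (p θ)) (hCsub : C ⊆ Θ)
    (hpcont : ∀ k, ContinuousOn (fun θ => p θ k) C) :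
    ContinuousOn (fun θ => ∑' k, Real.sqrt (r k) * Real.sqrt (p θ k)) C := by
  have hTU : TendstoUniformlyOn
      (fun K θ => ∑ k ∈ Finset.range K, Real.sqrt (r k) * Real.sqrt (p θ k))
      (fun θ => ∑' k, Real.sqrt (r k) * Real.sqrt (p θ k)) atTop C := by
    rw [Metric.tendstoUniformlyOn_iff]
    intro ε hε
    have htail : Tendsto (fun K => Real.sqrt (∑' k, r (k + K))) atTop (𝓝 0) := by
      have h0 := tendsto_sum_nat_add r
      have := h0.sqrt
      simpa using this
    filter_upwards [htail.eventually (gt_mem_nhds hε)] with K hK θ hθ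
    have hpd := hp θ (hCsub hθ)
    have hsm := summable_sqrt_mul hr.1 hpd.1 hr.2.summable hpd.2.summable
    have hsplit := Summable.sum_add_tsum_nat_add (f := fun k => Real.sqrt (r k) * Real.sqrt (p θ k))
      K hsm
    have htailbd : ∑' k, Real.sqrt (r (k + K)) * Real.sqrt (p θ (k + K))
        ≤ Real.sqrt (∑' k, r (k + K)) := by
      have hcs := tsum_sqrt_mul_sqrt_le (a := fun k => r (k + K)) (b := fun k => p θ (k + K))
        (fun k => hr.1 _) (fun k => hpd.1 _)
        ((summable_nat_add_iff K).2 hr.2.summable)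
        ((summable_nat_add_iff K).2 hpd.2.summable)
      have hle1 : Real.sqrt (∑' k, p θ (k + K)) ≤ 1 := by
        rw [show (1:ℝ) = Real.sqrt 1 by rw [Real.sqrt_one]]
        exact Real.sqrt_le_sqrt (tail_tsum_le_one hpd K)
      calc ∑' k, Real.sqrt (r (k + K)) * Real.sqrt (p θ (k + K))
          ≤ Real.sqrt (∑' k, r (k + K)) * Real.sqrt (∑' k, p θ (k + K)) := hcs
        _ ≤ Real.sqrt (∑' k, r (k + K)) * 1 :=
            mul_le_mul_of_nonneg_left hle1 (Real.sqrt_nonneg _)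
        _ = Real.sqrt (∑' k, r (k + K)) := mul_one _
    have htail_nonneg : 0 ≤ ∑' k, Real.sqrt (r (k + K)) * Real.sqrt (p θ (k + K)) :=
      tsum_nonneg (fun k => mul_nonneg (Real.sqrt_nonneg _) (Real.sqrt_nonneg _))
    rw [Real.dist_eq]
    have heq : (∑' k, Real.sqrt (r k) * Real.sqrt (p θ k))
        - ∑ k ∈ Finset.range K, Real.sqrt (r k) * Real.sqrt (p θ k)
        = ∑' k, Real.sqrt (r (k + K)) * Real.sqrt (p θ (k + K)) := by
      linarith [hsplit]
    rw [heq, abs_of_nonneg htail_nonneg]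
    calc ∑' k, Real.sqrt (r (k + K)) * Real.sqrt (p θ (k + K))
        ≤ Real.sqrt (∑' k, r (k + K)) := htailbd
      _ < ε := hK
  apply hTU.continuousOn
  refine Filter.Eventually.frequently ?_
  filter_upwards with K
  apply continuousOn_finset_sum
  intro k _
  exact continuousOn_const.mul (hpcont k).sqrt

lemma HD_continuousOn {Θ C : Set ℝ} {p : ℝ → ℕ → ℝ} {r : ℕ → ℝ}
    (hr : IsDistrib r) (hp : ∀ θ ∈ Θ, IsDistrib (p θ)) (hCsub : C ⊆ Θ)
    (hpcont : ∀ k, ContinuousOn (fun θ => p θ k) C) :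
    ContinuousOn (fun θ => HDdist p r θ) C := by
  have hS := continuousOn_tsum_sqrt hr hp hCsub hpcont
  have hc : ContinuousOn
      (fun θ => 2 - 2 * ∑' k, Real.sqrt (r k) * Real.sqrt (p θ k)) C :=
    continuousOn_const.sub (continuousOn_const.mul hS)
  apply hc.congr
  intro θ hθ
  exact HDdist_eq_two_sub p r θ hr (hp θ (hCsub hθ))

lemma abs_HD_sub_le {p : ℝ → ℕ → ℝ} {q q' : ℕ → ℝ} (hq : IsDistrib q) (hq' : IsDistrib q')
    {θ : ℝ} (hpθ : IsDistrib (p θ)) :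
    |HDdist p q' θ - HDdist p q θ|
      ≤ 4 * Real.sqrt (∑' k, (Real.sqrt (q' k) - Real.sqrt (q k))^2) := by
  set Q := sqel hq.1 hq.2.summable with hQdef
  set Q' := sqel hq'.1 hq'.2.summable with hQ'def
  set P := sqel hpθ.1 hpθ.2.summable with hPdef
  have hnQ : ‖Q‖ = 1 := by rw [hQdef, norm_sqel, hq.2.tsum_eq, Real.sqrt_one]
  have hnQ' : ‖Q'‖ = 1 := by rw [hQ'def, norm_sqel, hq'.2.tsum_eq, Real.sqrt_one]
  have hnP : ‖P‖ = 1 := by rw [hPdef, norm_sqel, hpθ.2.tsum_eq, Real.sqrt_one]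
  have hhd : HDdist p q θ = ‖Q - P‖^2 :=
    HDdist_eq_normsq p q θ hq.1 hq.2.summable hpθ.1 hpθ.2.summable
  have hhd' : HDdist p q' θ = ‖Q' - P‖^2 :=
    HDdist_eq_normsq p q' θ hq'.1 hq'.2.summable hpθ.1 hpθ.2.summable
  have he : ∑' k, (Real.sqrt (q' k) - Real.sqrt (q k))^2 = ‖Q' - Q‖^2 := by
    rw [hellL2_norm_sq]
    apply tsum_congr; intro k
    have hk : (Q' - Q) k = Real.sqrt (q' k) - Real.sqrt (q k) := by
      simp [hQdef, hQ'def, sqel]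
      rfl
    rw [hk]
  rw [hhd, hhd', he, Real.sqrt_sq (norm_nonneg _)]
  have h1 : |‖Q' - P‖ - ‖Q - P‖| ≤ ‖Q' - Q‖ := by
    have h := abs_norm_sub_norm_le (Q' - P) (Q - P)
    simpa [sub_sub_sub_cancel_right] using h
  have h2 : ‖Q' - P‖ ≤ 2 := by
    calc ‖Q' - P‖ ≤ ‖Q'‖ + ‖P‖ := norm_sub_le _ _
      _ = 2 := by rw [hnQ', hnP]; norm_num
  have h3 : ‖Q - P‖ ≤ 2 := by
    calc ‖Q - P‖ ≤ ‖Q‖ + ‖P‖ := norm_sub_le _ _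
      _ = 2 := by rw [hnQ, hnP]; norm_num
  have h4 : 0 ≤ ‖Q' - P‖ := norm_nonneg _
  have h5 : 0 ≤ ‖Q - P‖ := norm_nonneg _
  have h6 := abs_le.1 h1
  rw [abs_le]
  constructor <;> nlinarith [h6.1, h6.2]

end

/-- continuity of the minimum Hellinger distance functional: if
`Σ_k (q_{n,k}^{1/2} - q_k^{1/2})² → 0`, then the minimizers of `HD(q_n,·)` eventually
exist and converge to the unique minimizer `θ₀` of `HD(q,·)`. -/
theorem stmt_4
    (Θ : Set ℝ) (p : ℝ → ℕ → ℝ) (q : ℕ → ℝ) (C : Set ℝ) (θs θ₀ : ℝ)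
    (qn : ℕ → ℕ → ℝ)
    (hp : ∀ θ ∈ Θ, IsDistrib (p θ)) (hppos : ∀ θ ∈ Θ, ∀ k, 0 < p θ k)
    (hq : IsDistrib q) (hqn : ∀ n, IsDistrib (qn n))
    (hC : IsCompact C) (hCsub : C ⊆ Θ) (hθs : θs ∈ C)
    (hinf : ∃ c, HDdist p q θs < c ∧ ∀ θ ∈ Θ \ C, c ≤ HDdist p q θ)
    (hθ₀ : θ₀ ∈ Θ) (hθ₀min : ∀ θ ∈ Θ, HDdist p q θ₀ ≤ HDdist p q θ)
    (hθ₀uniq : ∀ θ₁ ∈ Θ, (∀ θ ∈ Θ, HDdist p q θ₁ ≤ HDdist p q θ) → θ₁ = θ₀)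
    (hpcont : ∀ k, ContinuousOn (fun θ => p θ k) C)
    (hl2 : Tendsto (fun n => ∑' k, (Real.sqrt (qn n k) - Real.sqrt (q k))^2) atTop (𝓝 0)) :
    (∀ᶠ n in atTop, ∃ θ ∈ Θ, ∀ t ∈ Θ, HDdist p (qn n) θ ≤ HDdist p (qn n) t) ∧
    ∀ θn : ℕ → ℝ,
      (∀ᶠ n in atTop, θn n ∈ Θ ∧
        ∀ t ∈ Θ, HDdist p (qn n) (θn n) ≤ HDdist p (qn n) t) →
      Tendsto θn atTop (𝓝 θ₀) := by
  classical
  set δ : ℕ → ℝ := fun n => 4 * Real.sqrt (∑' k, (Real.sqrt (qn n k) - Real.sqrt (q k))^2)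
    with hδdef
  have hδ0 : ∀ n, 0 ≤ δ n := fun n =>
    mul_nonneg (by norm_num) (Real.sqrt_nonneg _)
  have hδtend : Tendsto δ atTop (𝓝 0) := by
    have h1 := hl2.sqrt
    rw [Real.sqrt_zero] at h1
    have h4 := h1.const_mul (4:ℝ)
    simpa using h4
  have hub : ∀ n, ∀ θ ∈ Θ,
      |HDdist p (qn n) θ - HDdist p q θ| ≤ δ n := by
    intro n θ hθ
    exact abs_HD_sub_le hq (hqn n) (hp θ hθ)
  obtain ⟨c, hc1, hc2⟩ := hinf
  have hθsΘ : θs ∈ Θ := hCsub hθs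
  have hgappos : 0 < (c - HDdist p q θs) / 3 := by linarith
  have hevδ : ∀ᶠ n in atTop, δ n < (c - HDdist p q θs) / 3 :=
    hδtend.eventually (gt_mem_nhds hgappos)
  have hDncont : ∀ n, ContinuousOn (fun θ => HDdist p (qn n) θ) C :=
    fun n => HD_continuousOn (hqn n) hp hCsub hpcont
  have hDcont : ContinuousOn (fun θ => HDdist p q θ) C :=
    HD_continuousOn hq hp hCsub hpcont
  have hkey : ∀ n, δ n < (c - HDdist p q θs) / 3 →
      ∃ θm ∈ C, ∀ t ∈ Θ, HDdist p (qn n) θm ≤ HDdist p (qn n) t := by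
    intro n hn
    obtain ⟨θm, hθmC, hθmmin⟩ := hC.exists_isMinOn ⟨θs, hθs⟩ (hDncont n)
    rw [isMinOn_iff] at hθmmin
    refine ⟨θm, hθmC, ?_⟩
    intro t ht
    by_cases htC : t ∈ C
    · exact hθmmin t htC
    · have h1 : c ≤ HDdist p q t := hc2 t ⟨ht, htC⟩
      have h2 := abs_le.1 (hub n t ht)
      have h3 := abs_le.1 (hub n θs hθsΘ)
      have h4 : HDdist p (qn n) θm ≤ HDdist p (qn n) θs := hθmmin θs hθs
      linarith [h2.1, h3.2]
  constructor
  · filter_upwards [hevδ] with n hn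
    obtain ⟨θm, hθmC, hmin⟩ := hkey n hn
    exact ⟨θm, hCsub hθmC, hmin⟩
  · intro θn hθn
    have hevC : ∀ᶠ n in atTop, θn n ∈ C := by
      filter_upwards [hθn, hevδ] with n hn hδn
      by_contra hnC
      have h1 : c ≤ HDdist p q (θn n) := hc2 _ ⟨hn.1, hnC⟩
      have h2 := abs_le.1 (hub n (θn n) hn.1)
      have h3 := abs_le.1 (hub n θs hθsΘ)
      have h4 : HDdist p (qn n) (θn n) ≤ HDdist p (qn n) θs := hn.2 θs hθsΘ
      linarith [h2.1, h3.2]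
    have hDlim : Tendsto (fun n => HDdist p q (θn n)) atTop (𝓝 (HDdist p q θ₀)) := by
      have hupper : ∀ᶠ n in atTop,
          HDdist p q (θn n) ≤ HDdist p q θ₀ + 2 * δ n := by
        filter_upwards [hθn] with n hn
        have h2 := abs_le.1 (hub n (θn n) hn.1)
        have h3 := abs_le.1 (hub n θ₀ hθ₀)
        have h4 : HDdist p (qn n) (θn n) ≤ HDdist p (qn n) θ₀ := hn.2 θ₀ hθ₀
        linarith [h2.2, h3.1]
      have hlower : ∀ᶠ n in atTop, HDdist p q θ₀ ≤ HDdist p q (θn n) := by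
        filter_upwards [hθn] with n hn
        exact hθ₀min _ hn.1
      have hup : Tendsto (fun n => HDdist p q θ₀ + 2 * δ n) atTop
          (𝓝 (HDdist p q θ₀)) := by
        have h5 := hδtend.const_mul (2:ℝ)
        have h6 : Tendsto (fun n : ℕ => HDdist p q θ₀ + 2 * δ n) atTop
            (𝓝 (HDdist p q θ₀ + 2 * 0)) := tendsto_const_nhds.add h5
        simpa using h6
      exact tendsto_of_tendsto_of_tendsto_of_le_of_le' tendsto_const_nhds hup hlower hupper
    apply Filter.tendsto_of_subseq_tendsto
    intro ns hns
    set θ' : ℕ → ℝ := fun m => if θn m ∈ C then θn m else θs with hθ'def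
    have hθ'C : ∀ m, θ' m ∈ C := by
      intro m
      by_cases h : θn m ∈ C <;> simp [hθ'def, h, hθs]
    obtain ⟨a, haC, φ, hφ, hφtend⟩ :=
      hC.tendsto_subseq (x := fun i => θ' (ns i)) (fun i => hθ'C _)
    have hcomp : Tendsto (fun i => ns (φ i)) atTop atTop := hns.comp hφ.tendsto_atTop
    have hee : (fun i => θ' (ns (φ i))) =ᶠ[atTop] (fun i => θn (ns (φ i))) := by
      filter_upwards [hcomp.eventually hevC] with i hi
      simp [hθ'def, hi]
    have hDa : Tendsto (fun i => HDdist p q (θ' (ns (φ i)))) atTop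
        (𝓝 (HDdist p q a)) := by
      have h1 : Tendsto (fun i => θ' (ns (φ i))) atTop (𝓝[C] a) :=
        tendsto_nhdsWithin_iff.2 ⟨hφtend, Eventually.of_forall (fun i => hθ'C _)⟩
      exact ((hDcont a haC).tendsto).comp h1
    have hDθ₀' : Tendsto (fun i => HDdist p q (θ' (ns (φ i)))) atTop
        (𝓝 (HDdist p q θ₀)) := by
      have h2 : Tendsto (fun i => HDdist p q (θn (ns (φ i)))) atTop
          (𝓝 (HDdist p q θ₀)) := hDlim.comp hcomp
      refine h2.congr' ?_
      filter_upwards [hee] with i hi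
      rw [hi]
    have hDaθ₀ : HDdist p q a = HDdist p q θ₀ := tendsto_nhds_unique hDa hDθ₀'
    have haθ₀ : a = θ₀ := by
      apply hθ₀uniq a (hCsub haC)
      intro θ hθ
      rw [hDaθ₀]
      exact hθ₀min θ hθ
    refine ⟨φ, ?_⟩
    have htend' : Tendsto (fun i => θ' (ns (φ i))) atTop (𝓝 θ₀) := haθ₀ ▸ hφtend
    exact Filter.Tendsto.congr' hee htend'
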